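/- Let X be an n-valued group with finite generating sets S and S', and let y, y' ∈ X. Then there exists a positive integer C such that for every natural number r, |B_S(y, r / C)| ≤ |B_{S'}(y', r)| ≤ |B_S(y, C·r)|, where r / C denotes integer division and |·| denotes cardinality of the ball. -/

import Mathlib

/-- An `n`-valued group: multiplication takes values in `n`-element multisets. -/
structure NValuedGroup (n : ℕ) (X : Type*) where
  mul : X → X → Multiset X
  e : X
  inv : X → X
  one_le : 1 ≤ n
  card_mul : ∀ x y, (mul x y).card = n
  assoc : ∀ x y z, (mul x y).bind (fun t => mul t z) = (mul y z).bind (fun t => mul x t)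
  e_mul : ∀ x, mul e x = Multiset.replicate n x
  mul_e : ∀ x, mul x e = Multiset.replicate n x
  inv_mul : ∀ x, e ∈ mul (inv x) x
  mul_inv : ∀ x, e ∈ mul x (inv x)

variable {n : ℕ} {X : Type*}

/-- The multiset `x * s₁ * ⋯ * s_k` (iterated left-to-right, starting from `{x}`). -/
def NValuedGroup.wordProd (G : NValuedGroup n X) (x : X) (l : List X) : Multiset X :=
  l.foldl (fun m s => m.bind (fun t => G.mul t s)) {x}

/-- The ball `B_S(x, r)`: elements lying in `Set(x * s₁ * ⋯ * s_m)` for some `m ≤ r`,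
`s₁, …, s_m ∈ S`. -/
def NValuedGroup.ball (G : NValuedGroup n X) (S : Set X) (x : X) (r : ℕ) : Set X :=
  {y | ∃ l : List X, l.length ≤ r ∧ (∀ s ∈ l, s ∈ S) ∧ y ∈ G.wordProd x l}

/-- `S` generates `X`: every element lies in `Set(s₁ * ⋯ * s_m)` for some `m ≥ 1`,
`s₁, …, s_m ∈ S`. -/
def NValuedGroup.IsGenSet (G : NValuedGroup n X) (S : Set X) : Prop :=
  ∀ x : X, ∃ s₀ ∈ S, ∃ l : List X, (∀ s ∈ l, s ∈ S) ∧ x ∈ G.wordProd s₀ l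

namespace NValuedGroup
variable (G : NValuedGroup n X)

lemma foldl_bind (l : List X) (m : Multiset X) :
    l.foldl (fun m s => m.bind (fun t => G.mul t s)) m
      = m.bind (fun z => G.wordProd z l) := by
  induction l generalizing m with
  | nil =>
      have h := Multiset.bind_singleton m id
      simp only [wordProd, List.foldl_nil]
      simpa using h.symm
  | cons s l ih =>
      simp only [List.foldl_cons]
      rw [ih, Multiset.bind_assoc]
      congr 1
      funext t
      show _ = List.foldl (fun m s => m.bind fun t => G.mul t s)
        (Multiset.bind {t} fun u => G.mul u s) l
      rw [Multiset.singleton_bind]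
      exact (ih _).symm

lemma wordProd_nil (x : X) : G.wordProd x [] = {x} := rfl

lemma wordProd_cons (x s : X) (l : List X) :
    G.wordProd x (s :: l) = (G.mul x s).bind (fun z => G.wordProd z l) := by
  show List.foldl (fun m s => m.bind fun t => G.mul t s)
    (Multiset.bind {x} fun u => G.mul u s) l = _
  rw [Multiset.singleton_bind, foldl_bind]

lemma wordProd_singleton (x s : X) : G.wordProd x [s] = G.mul x s := by
  rw [wordProd_cons]
  have h := Multiset.bind_singleton (G.mul x s) id
  simp only [wordProd_nil]
  simpa using h

lemma wordProd_append (x : X) (l₁ l₂ : List X) :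
    G.wordProd x (l₁ ++ l₂) = (G.wordProd x l₁).bind (fun z => G.wordProd z l₂) := by
  simp only [wordProd, List.foldl_append]
  rw [foldl_bind]
  rfl

lemma mem_wordProd_append {x z w : X} {l₁ l₂ : List X}
    (h₁ : z ∈ G.wordProd x l₁) (h₂ : w ∈ G.wordProd z l₂) :
    w ∈ G.wordProd x (l₁ ++ l₂) := by
  rw [wordProd_append, Multiset.mem_bind]
  exact ⟨z, h₁, h₂⟩

lemma mem_wordProd_cons_of_mem_mul {l : List X} {a c : X}
    (hc : c ∈ G.wordProd a l) : ∀ {x z : X}, z ∈ G.mul x c → z ∈ G.wordProd x (a :: l) := by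
  induction l using List.reverseRecOn generalizing c with
  | nil =>
      intro x z hz
      rw [wordProd_nil, Multiset.mem_singleton] at hc
      subst hc
      rwa [wordProd_singleton]
  | append_singleton l s ih =>
      intro x z hz
      rw [wordProd_append, Multiset.mem_bind] at hc
      obtain ⟨d, hd, hcd⟩ := hc
      rw [wordProd_singleton] at hcd
      have hz' : z ∈ (G.mul d s).bind (fun t => G.mul x t) :=
        Multiset.mem_bind.2 ⟨c, hcd, hz⟩
      rw [← G.assoc, Multiset.mem_bind] at hz'
      obtain ⟨u, hu, hzu⟩ := hz'
      have hu' : u ∈ G.wordProd x (a :: l) := ih hd hu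
      have : z ∈ G.wordProd x ((a :: l) ++ [s]) :=
        G.mem_wordProd_append hu' (by rwa [wordProd_singleton])
      simpa using this

lemma exists_word {S : Set X} (hSgen : G.IsGenSet S) (x t : X) :
    ∃ l : List X, (∀ s ∈ l, s ∈ S) ∧ t ∈ G.wordProd x l := by
  obtain ⟨s₀, hs₀, l₀, hl₀, hinv⟩ := hSgen (G.inv x)
  have he : G.e ∈ G.wordProd x (s₀ :: l₀) :=
    G.mem_wordProd_cons_of_mem_mul hinv (G.mul_inv x)
  obtain ⟨s₁, hs₁, l₁, hl₁, ht⟩ := hSgen t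
  have htet : t ∈ G.mul G.e t := by
    rw [G.e_mul]
    exact Multiset.mem_replicate.2 ⟨Nat.one_le_iff_ne_zero.mp G.one_le, rfl⟩
  have ht' : t ∈ G.wordProd G.e (s₁ :: l₁) := G.mem_wordProd_cons_of_mem_mul ht htet
  refine ⟨(s₀ :: l₀) ++ (s₁ :: l₁), ?_, G.mem_wordProd_append he ht'⟩
  intro s hs
  rcases List.mem_append.1 hs with h | h
  · rcases h with _ | h
    · exact hs₀
    · exact hl₀ _ (by assumption)
  · rcases h with _ | h
    · exact hs₁
    · exact hl₁ _ (by assumption)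

lemma mem_ball_self (S : Set X) (x : X) (r : ℕ) : x ∈ G.ball S x r :=
  ⟨[], by simp, by simp, by rw [wordProd_nil]; exact Multiset.mem_singleton_self x⟩

lemma ball_mono (S : Set X) (x : X) {r r' : ℕ} (h : r ≤ r') :
    G.ball S x r ⊆ G.ball S x r' := by
  rintro z ⟨l, hl, hS, hz⟩
  exact ⟨l, hl.trans h, hS, hz⟩

lemma ball_zero (S : Set X) (x : X) : G.ball S x 0 = {x} := by
  ext z
  constructor
  · rintro ⟨l, hl, -, hz⟩
    have hnil : l = [] := List.eq_nil_of_length_eq_zero (Nat.le_zero.mp hl)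
    subst hnil
    rw [wordProd_nil, Multiset.mem_singleton] at hz
    exact hz
  · intro hz
    rw [Set.mem_singleton_iff] at hz
    subst hz
    exact G.mem_ball_self S z 0

lemma ball_finite {S : Set X} (hSfin : S.Finite) (x : X) (r : ℕ) :
    (G.ball S x r).Finite := by
  induction r with
  | zero => rw [ball_zero]; exact Set.finite_singleton x
  | succ r ih =>
      have hsub : G.ball S x (r + 1) ⊆
          G.ball S x r ∪ ⋃ u ∈ G.ball S x r, ⋃ s ∈ S, {z | z ∈ G.mul u s} := by
        rintro z ⟨l, hl, hlS, hz⟩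
        rcases List.eq_nil_or_concat l with rfl | ⟨l₁, s, rfl⟩
        · exact Or.inl ⟨[], by simp, by simp, hz⟩
        · rw [List.concat_eq_append] at hl hlS hz
          rw [wordProd_append, Multiset.mem_bind] at hz
          obtain ⟨u, hu, hzu⟩ := hz
          rw [wordProd_singleton] at hzu
          right
          have hlen : l₁.length ≤ r := by
            simp only [List.length_append, List.length_singleton] at hl
            omega
          have humem : u ∈ G.ball S x r :=
            ⟨l₁, hlen, fun t ht => hlS t (by simp [ht]), hu⟩
          exact Set.mem_biUnion humem (Set.mem_biUnion (hlS s (by simp)) hzu)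
      exact ((ih.union (ih.biUnion fun u _ =>
        hSfin.biUnion fun s _ => Multiset.finite_toSet _))).subset hsub

lemma ball_subset_ball {S S' : Set X} (hSgen : G.IsGenSet S) (hS'fin : S'.Finite)
    (y y' : X) : ∃ K : ℕ, 0 < K ∧ ∀ r : ℕ, 1 ≤ r →
      G.ball S' y' r ⊆ G.ball S y (K * r) := by
  have hex : ∀ s' : X, ∃ w : List X, (∀ s ∈ w, s ∈ S) ∧
      ∀ x z : X, z ∈ G.mul x s' → z ∈ G.wordProd x w := by
    intro s'
    obtain ⟨s₀, hs₀, l, hlS, hs'⟩ := hSgen s'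
    refine ⟨s₀ :: l, ?_, fun x z hz => G.mem_wordProd_cons_of_mem_mul hs' hz⟩
    intro t ht
    rcases List.mem_cons.1 ht with rfl | ht
    · exact hs₀
    · exact hlS t ht
  choose f hfS hf using hex
  set K₁ := hS'fin.toFinset.sup (fun s' => (f s').length) with hK₁
  have hrep : ∀ (l' : List X) (x z : X), (∀ s ∈ l', s ∈ S') → z ∈ G.wordProd x l' →
      ∃ w : List X, (∀ s ∈ w, s ∈ S) ∧ w.length ≤ K₁ * l'.length ∧
        z ∈ G.wordProd x w := by
    intro l'
    induction l' with
    | nil =>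
        intro x z _ hz
        rw [wordProd_nil, Multiset.mem_singleton] at hz
        subst hz
        exact ⟨[], by simp, by simp, by
          rw [wordProd_nil]; exact Multiset.mem_singleton_self _⟩
    | cons s' l' ih =>
        intro x z hmem hz
        rw [wordProd_cons, Multiset.mem_bind] at hz
        obtain ⟨u, hu, hzu⟩ := hz
        obtain ⟨w', hw'S, hw'len, hzw'⟩ :=
          ih u z (fun t ht => hmem t (List.mem_cons_of_mem _ ht)) hzu
        have hu' : u ∈ G.wordProd x (f s') := hf s' x u hu
        have hflen : (f s').length ≤ K₁ := by
          rw [hK₁]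
          exact Finset.le_sup (f := fun t => (f t).length)
            (hS'fin.mem_toFinset.2 (hmem s' List.mem_cons_self))
        refine ⟨f s' ++ w', ?_, ?_, G.mem_wordProd_append hu' hzw'⟩
        · intro t ht
          rcases List.mem_append.1 ht with h | h
          · exact hfS s' t h
          · exact hw'S t h
        · simp only [List.length_append, List.length_cons, Nat.mul_succ]
          omega
  obtain ⟨w₀, hw₀S, hw₀⟩ := G.exists_word hSgen y y'
  refine ⟨w₀.length + K₁ + 1, by omega, ?_⟩
  rintro r hr z ⟨l', hl'len, hl'S, hz⟩
  obtain ⟨w, hwS, hwlen, hzw⟩ := hrep l' y' z hl'S hz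
  refine ⟨w₀ ++ w, ?_, ?_, G.mem_wordProd_append hw₀ hzw⟩
  · simp only [List.length_append]
    have h1 : w.length ≤ K₁ * r :=
      hwlen.trans (Nat.mul_le_mul_left _ hl'len)
    nlinarith
  · intro t ht
    rcases List.mem_append.1 ht with h | h
    · exact hw₀S t h
    · exact hwS t h

end NValuedGroup

/-- Growth functions with respect to two finite generating sets and two centers are
equivalent. -/
theorem ball_card_equiv_of_genSets (G : NValuedGroup n X) (S S' : Set X)
    (hSfin : S.Finite) (hS'fin : S'.Finite)
    (hSgen : G.IsGenSet S) (hS'gen : G.IsGenSet S') (y y' : X) :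
    ∃ C : ℕ, 0 < C ∧ ∀ r : ℕ,
      Nat.card (G.ball S y (r / C)) ≤ Nat.card (G.ball S' y' r) ∧
      Nat.card (G.ball S' y' r) ≤ Nat.card (G.ball S y (C * r)) := by
  obtain ⟨K, hKpos, hK⟩ := G.ball_subset_ball hSgen hS'fin y y'
  obtain ⟨K', hK'pos, hK'⟩ := G.ball_subset_ball hS'gen hSfin y' y
  refine ⟨K + K', by omega, fun r => ?_⟩
  constructor
  · by_cases hq : r / (K + K') = 0
    · rw [hq, G.ball_zero]
      have hpos : 0 < Nat.card (G.ball S' y' r) := by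
        have h1 := (G.ball_finite hS'fin y' r).to_subtype
        have h2 := Set.Nonempty.to_subtype ⟨y', G.mem_ball_self S' y' r⟩
        exact Nat.card_pos
      have h3 : Nat.card ({y} : Set X) = 1 := by simp
      omega
    · have h1 : G.ball S y (r / (K + K')) ⊆ G.ball S' y' r := by
        refine (hK' _ (Nat.one_le_iff_ne_zero.2 hq)).trans (G.ball_mono _ _ ?_)
        have h2 : (K + K') * (r / (K + K')) ≤ r := Nat.mul_div_le r (K + K')
        have h3 : K' * (r / (K + K')) ≤ (K + K') * (r / (K + K')) :=
          Nat.mul_le_mul_right _ (by omega)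
        omega
      exact Nat.card_mono (G.ball_finite hS'fin y' r) h1
  · rcases Nat.eq_zero_or_pos r with rfl | hr
    · rw [Nat.mul_zero, G.ball_zero, G.ball_zero]
      simp
    · exact Nat.card_mono (G.ball_finite hSfin y ((K + K') * r))
        ((hK r hr).trans (G.ball_mono _ _ (Nat.mul_le_mul_right r (by omega))))
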